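/- Let V be a vector space over a field, W a subspace, S(W) a subsemigroup of L(W), and f ∈ L_{S(W)}(V). Then there exists a subspace U of V such that U is a (linear) transversal of ker(f) and U ∩ W is a transversal of ker(f↾W); that is, f restricts to a bijection from U onto R(f) and f↾W restricts to a bijection from U ∩ W onto R(f↾W). -/
import Mathlib


open Set

/-- `S` is a subsemigroup of `L(M)` (closed under composition). -/
def LIsSubsemigroup {K M : Type*} [Field K] [AddCommGroup M] [Module K M]
    (S : Set (M →ₗ[K] M)) : Prop :=
  ∀ a ∈ S, ∀ b ∈ S, a ∘ₗ b ∈ S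

/-- `S` is a subgroup of `Aut(M)`. -/
def LIsSubgroupOfAut {K M : Type*} [Field K] [AddCommGroup M] [Module K M]
    (S : Set (M →ₗ[K] M)) : Prop :=
  LIsSubsemigroup S ∧ (∀ a ∈ S, Function.Bijective a) ∧ (LinearMap.id ∈ S) ∧
    ∀ a ∈ S, ∃ b ∈ S, a ∘ₗ b = LinearMap.id ∧ b ∘ₗ a = LinearMap.id

/-- `S` is a regular semigroup of linear maps: `∀ a ∈ S, ∃ b ∈ S, aba = a`
(composed left to right, i.e. `x ↦ a (b (a x))`). -/
def LIsRegularOn {K M : Type*} [Field K] [AddCommGroup M] [Module K M]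
    (S : Set (M →ₗ[K] M)) : Prop :=
  ∀ a ∈ S, ∃ b ∈ S, a ∘ₗ b ∘ₗ a = a

/-- `S` is an inverse semigroup of linear maps. -/
def LIsInverseOn {K M : Type*} [Field K] [AddCommGroup M] [Module K M]
    (S : Set (M →ₗ[K] M)) : Prop :=
  ∀ a ∈ S, ∃! b, b ∈ S ∧ a ∘ₗ b ∘ₗ a = a ∧ b ∘ₗ a ∘ₗ b = b

/-- `u` is a unit of the linear monoid `S`. -/
def LIsUnitOn {K M : Type*} [Field K] [AddCommGroup M] [Module K M]
    (S : Set (M →ₗ[K] M)) (u : M →ₗ[K] M) : Prop :=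
  u ∈ S ∧ ∃ v ∈ S, u ∘ₗ v = LinearMap.id ∧ v ∘ₗ u = LinearMap.id

/-- `a` is a unit-regular element of `S`. -/
def LUnitRegularElem {K M : Type*} [Field K] [AddCommGroup M] [Module K M]
    (S : Set (M →ₗ[K] M)) (a : M →ₗ[K] M) : Prop :=
  ∃ u, LIsUnitOn S u ∧ a ∘ₗ u ∘ₗ a = a

/-- `S` is a unit-regular linear monoid. -/
def LIsUnitRegularOn {K M : Type*} [Field K] [AddCommGroup M] [Module K M]
    (S : Set (M →ₗ[K] M)) : Prop :=
  ∀ a ∈ S, LUnitRegularElem S a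

/-- `G` is a subgroup contained in the semigroup `S` of linear maps. -/
def LIsSubgroupIn {K M : Type*} [Field K] [AddCommGroup M] [Module K M]
    (S G : Set (M →ₗ[K] M)) : Prop :=
  G ⊆ S ∧ (∀ a ∈ G, ∀ b ∈ G, a ∘ₗ b ∈ G) ∧
    ∃ e ∈ G, (∀ a ∈ G, a ∘ₗ e = a ∧ e ∘ₗ a = a) ∧
      ∀ a ∈ G, ∃ b ∈ G, a ∘ₗ b = e ∧ b ∘ₗ a = e

/-- `S` is a completely regular semigroup of linear maps: every element
belongs to a subgroup of `S`. -/
def LIsCompletelyRegularOn {K M : Type*} [Field K] [AddCommGroup M] [Module K M]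
    (S : Set (M →ₗ[K] M)) : Prop :=
  ∀ a ∈ S, ∃ G, LIsSubgroupIn S G ∧ a ∈ G

/-- The semigroup `L_{S(W)}(V)` of all linear self-maps of `V` that leave `W`
invariant and whose restriction to `W` lies in `S`. -/
def LSemi {K V : Type*} [Field K] [AddCommGroup V] [Module K V] (W : Submodule K V)
    (S : Set (W →ₗ[K] W)) : Set (V →ₗ[K] V) :=
  {f | ∃ h : ∀ x ∈ W, f x ∈ W, f.restrict h ∈ S}

theorem stmt12 {K V : Type*} [Field K] [AddCommGroup V] [Module K V]
    (W : Submodule K V) (S : Set (W →ₗ[K] W)) (hS : LIsSubsemigroup S)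
    (f : V →ₗ[K] V) (hf : f ∈ LSemi W S) :
    ∃ U : Submodule K V,
      (∀ v : V, ∃! u, u ∈ U ∧ f u = f v) ∧
      (∀ w ∈ W, ∃! u, u ∈ U ⊓ W ∧ f u = f w) := by
  classical
  set p : Submodule K W := (LinearMap.ker f ⊓ W).comap W.subtype with hp
  obtain ⟨q, hq⟩ := Submodule.exists_isCompl p
  set UW : Submodule K V := q.map W.subtype with hUWdef
  obtain ⟨C, hC⟩ := Submodule.exists_isCompl (LinearMap.ker f ⊔ UW)
  have hUWle : UW ≤ W := Submodule.map_subtype_le W q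
  -- key: elements of UW ⊔ C in the kernel are zero
  have hdisj : ∀ x ∈ UW ⊔ C, f x = 0 → x = 0 := by
    intro x hx hfx
    obtain ⟨a, ha, c, hc, rfl⟩ := Submodule.mem_sup.mp hx
    have hcmem : c ∈ LinearMap.ker f ⊔ UW := by
      have : a + c - a ∈ LinearMap.ker f ⊔ UW :=
        Submodule.sub_mem _ (Submodule.mem_sup_left (LinearMap.mem_ker.mpr hfx))
          (Submodule.mem_sup_right ha)
      simpa using this
    have hc0 : c = 0 := (Submodule.disjoint_def.mp hC.disjoint) c hcmem hc
    subst hc0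
    simp only [add_zero] at hfx ⊢
    obtain ⟨b, hb, rfl⟩ := Submodule.mem_map.mp ha
    have hbp : b ∈ p := by
      simp only [hp, Submodule.mem_comap, Submodule.mem_inf, LinearMap.mem_ker]
      exact ⟨hfx, b.2⟩
    have hb0 : b = 0 := (Submodule.disjoint_def.mp hq.disjoint) b hbp hb
    simp [hb0]
  refine ⟨UW ⊔ C, ?_, ?_⟩
  · -- full transversal
    have htop : (UW ⊔ C) ⊔ LinearMap.ker f = ⊤ := by
      rw [sup_comm, ← sup_assoc]
      exact codisjoint_iff.mp hC.codisjoint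
    intro v
    have hv : v ∈ (UW ⊔ C) ⊔ LinearMap.ker f := htop ▸ Submodule.mem_top
    obtain ⟨u, hu, k, hk, huk⟩ := Submodule.mem_sup.mp hv
    have hfu : f u = f v := by
      have : f (u + k) = f v := by rw [huk]
      simpa [LinearMap.mem_ker.mp hk] using this
    refine ⟨u, ⟨hu, hfu⟩, ?_⟩
    rintro u' ⟨hu', hfu'⟩
    have : u' - u = 0 := by
      refine hdisj _ (Submodule.sub_mem _ hu' hu) ?_
      simp [hfu, hfu']
    exact sub_eq_zero.mp this
  · intro w hw
    have hwtop : (⟨w, hw⟩ : W) ∈ p ⊔ q := by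
      rw [codisjoint_iff.mp hq.codisjoint]; trivial
    obtain ⟨b, hb, c, hc, hbc⟩ := Submodule.mem_sup.mp hwtop
    have hbker : f (b : V) = 0 := by
      have := (Submodule.mem_comap.mp hb)
      exact LinearMap.mem_ker.mp (Submodule.mem_inf.mp this).1
    have hcw : (c : V) ∈ UW := ⟨c, hc, rfl⟩
    have hsum : (b : V) + (c : V) = w := by
      have := congrArg (Subtype.val) hbc
      simpa using this
    have hfc : f (c : V) = f w := by
      have : f ((b : V) + (c : V)) = f w := by rw [hsum]
      simpa [hbker] using this
    refine ⟨(c : V), ⟨Submodule.mem_inf.mpr ⟨Submodule.mem_sup_left hcw, c.2⟩, hfc⟩, ?_⟩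
    rintro u' ⟨hu', hfu'⟩
    have hmem := (Submodule.mem_inf.mp hu').1
    have : u' - (c : V) = 0 := by
      refine hdisj _ (Submodule.sub_mem _ hmem (Submodule.mem_sup_left hcw)) ?_
      simp [hfc, hfu']
    exact sub_eq_zero.mp this
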